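/- Equation (H3): α(xu+vy) − β(xv+uy) + δ(α²−β²) = 0 admits the multiplicative three-leg form (xu+δα)/(xv+δβ) = (βx−αy)/(αx−βy); i.e., for fields satisfying (H3) with nonzero denominators, this identity holds, and conversely it implies (H3). -/
import Mathlib

/-- Equation (H3): `α(xu+vy) − β(xv+uy) + δ(α²−β²) = 0` admits the
multiplicative three-leg form `(xu+δα)/(xv+δβ) = (βx−αy)/(αx−βy)`, and
conversely (for `x ≠ 0`, so that the nondegenerate factor can be cancelled). -/
theorem H3_three_leg_form
    (x u v y α β δ : ℂ)
    (h1 : x * v + δ * β ≠ 0) (h2 : α * x - β * y ≠ 0) (hx : x ≠ 0) :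
    α * (x * u + v * y) - β * (x * v + u * y) + δ * (α ^ 2 - β ^ 2) = 0 ↔
      (x * u + δ * α) / (x * v + δ * β) = (β * x - α * y) / (α * x - β * y) := by
  rw [div_eq_div_iff h1 h2]
  constructor
  · intro h
    have : x * (α * (x * u + v * y) - β * (x * v + u * y) + δ * (α ^ 2 - β ^ 2)) = 0 := by
      rw [h]; ring
    linear_combination this
  · intro h
    have hx' : x * (α * (x * u + v * y) - β * (x * v + u * y) + δ * (α ^ 2 - β ^ 2)) = 0 := by
      linear_combination h
    rcases mul_eq_zero.mp hx' with h0 | h0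
    · exact absurd h0 hx
    · exact h0
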